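/- arXiv:2205.08199 — 4 statements merged into one kernel-verified Lean document; each statement's English description precedes it below -/
import Mathlib

section
/- The function g(α) = (1/(2π))(√(1−α²) + α(π − arccos α)) admits the Taylor expansion g(α) = 1/(2π) + α/4 + Σ_{k≥1} (1/(2π)) (((2k−3)!!)² / (2k)!) α^{2k}, valid for all α ∈ [−1,1]. -/
open Real

noncomputable def gker (α : ℝ) : ℝ :=
  (1 / (2 * π)) * (Real.sqrt (1 - α ^ 2) + α * (π - Real.arccos α))

open Set

noncomputable def aCoef (k : ℕ) : ℝ :=
  ((Nat.doubleFactorial (2 * k - 1) : ℝ)) ^ 2 / ((Nat.factorial (2 * k)) : ℝ)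

lemma aCoef_zero : aCoef 0 = 1 := by simp [aCoef, Nat.doubleFactorial]

lemma aCoef_pos (k : ℕ) : 0 < aCoef k := by
  apply div_pos
  · positivity
  · exact_mod_cast Nat.factorial_pos _

lemma aCoef_rec (k : ℕ) :
    aCoef (k + 1) * (2 * k + 2) = aCoef k * (2 * k + 1) := by
  have h1 : 2 * (k + 1) - 1 = 2 * k + 1 := by omega
  have h2 : Nat.doubleFactorial (2 * k + 1) =
      (2 * k + 1) * Nat.doubleFactorial (2 * k - 1) := by
    simpa using Nat.doubleFactorial_add_one (2 * k)
  have h3 : Nat.factorial (2 * (k + 1)) =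
      (2 * k + 2) * ((2 * k + 1) * Nat.factorial (2 * k)) := by
    have : 2 * (k + 1) = (2 * k + 1) + 1 := by omega
    rw [this, Nat.factorial_succ, Nat.factorial_succ]
  have hf : ((Nat.factorial (2 * k)) : ℝ) ≠ 0 := by
    exact_mod_cast (Nat.factorial_pos _).ne'
  unfold aCoef
  rw [h1, h2, h3]
  push_cast
  field_simp

lemma aCoef_le_one (k : ℕ) : aCoef k ≤ 1 := by
  induction k with
  | zero => simp [aCoef_zero]
  | succ n ih =>
    have hrec := aCoef_rec n
    have h1 : aCoef (n + 1) = aCoef n * (2 * n + 1) / (2 * n + 2) := by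
      field_simp at hrec ⊢
      linarith [hrec]
    rw [h1]
    have hp := aCoef_pos n
    rw [div_le_one (by positivity)]
    nlinarith

lemma abs_aCoef_le_one (k : ℕ) : |aCoef k| ≤ 1 := by
  rw [abs_of_pos (aCoef_pos k)]; exact aCoef_le_one k

lemma summable_geom_sq {r : ℝ} (hr : |r| < 1) : Summable (fun k : ℕ => |r| ^ (2 * k)) := by
  have : (fun k : ℕ => |r| ^ (2 * k)) = fun k : ℕ => (|r| ^ 2) ^ k := by
    funext k; rw [← pow_mul]
  rw [this]
  apply summable_geometric_of_lt_one (by positivity)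
  nlinarith [abs_nonneg r]

lemma summable_of_bound {x : ℝ} (hx : |x| < 1) {f : ℕ → ℝ}
    (hf : ∀ k, |f k| ≤ |x| ^ (2 * k)) : Summable f :=
  (summable_geom_sq hx).of_norm_bounded (by simpa using hf)

noncomputable def S0 (x : ℝ) : ℝ := ∑' k : ℕ, aCoef k * x ^ (2 * k)
noncomputable def S1 (x : ℝ) : ℝ := ∑' k : ℕ, aCoef k / (2 * k + 1) * x ^ (2 * k + 1)
noncomputable def S2 (x : ℝ) : ℝ :=
  ∑' k : ℕ, aCoef k / ((2 * k + 1) * (2 * k + 2)) * x ^ (2 * k + 2)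

lemma term_bound0 {x : ℝ} (hx : |x| ≤ 1) (k : ℕ) {m : ℕ} :
    |aCoef k * x ^ (2 * k + m)| ≤ |x| ^ (2 * k) := by
  rw [abs_mul, abs_pow, pow_add]
  have h1 : |aCoef k| ≤ 1 := abs_aCoef_le_one k
  have h2 : |x| ^ m ≤ 1 := pow_le_one₀ (abs_nonneg x) hx
  have h3 : (0:ℝ) ≤ |x| ^ (2*k) := by positivity
  nlinarith [abs_nonneg (aCoef k), pow_nonneg (abs_nonneg x) m,
    mul_le_one₀ h1 (le_trans (pow_nonneg (abs_nonneg x) m) (le_refl _)) h2]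

lemma summable_S0 {x : ℝ} (hx : |x| < 1) : Summable (fun k : ℕ => aCoef k * x ^ (2 * k)) :=
  summable_of_bound hx (fun k => by simpa using term_bound0 hx.le k (m := 0))

lemma radius_setup {x : ℝ} (hx : |x| < 1) :
    ∃ r : ℝ, |x| < r ∧ r < 1 ∧ 1/2 ≤ r :=
  ⟨(1 + |x|) / 2, by linarith, by linarith, by linarith [abs_nonneg x]⟩

lemma abs_le_of_mem {r y : ℝ} (hy : y ∈ Ioo (-r) r) : |y| ≤ r := by
  rw [abs_le]; exact ⟨hy.1.le, hy.2.le⟩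

lemma pow_abs_le {r y : ℝ} (hr : 0 ≤ r) (hy : |y| ≤ r) (n : ℕ) : |y| ^ n ≤ |r| ^ n := by
  apply pow_le_pow_left₀ (abs_nonneg y)
  rw [abs_of_nonneg hr]; exact hy

lemma hasDerivAt_S1 {x : ℝ} (hx : |x| < 1) : HasDerivAt S1 (S0 x) x := by
  obtain ⟨r, hxr, hr1, hr0⟩ := radius_setup hx
  have hrabs : |r| < 1 := by rw [abs_of_nonneg (by linarith)]; exact hr1
  have hmem : x ∈ Ioo (-r) r := by
    constructor <;> [linarith [neg_abs_le x]; linarith [le_abs_self x]]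
  have h0 : (0:ℝ) ∈ Ioo (-r) r := by constructor <;> linarith
  exact hasDerivAt_tsum_of_isPreconnected
    (u := fun k : ℕ => |r| ^ (2 * k)) (summable_geom_sq hrabs)
    (isOpen_Ioo : IsOpen (Ioo (-r) r)) (convex_Ioo _ _).isPreconnected
    (g := fun k z => aCoef k / (2 * k + 1) * z ^ (2 * k + 1))
    (g' := fun k y => aCoef k * y ^ (2 * k))
    (fun k y _ => by
      have h := (hasDerivAt_pow (2 * k + 1) y).const_mul (aCoef k / (2 * k + 1))
      have he : aCoef k / (2 * k + 1) * (↑(2 * k + 1) * y ^ (2 * k + 1 - 1))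
          = aCoef k * y ^ (2 * k) := by
        have h2 : (2 * k + 1 - 1) = 2 * k := by omega
        rw [h2]
        push_cast
        have hne : ((2 : ℝ) * k + 1) ≠ 0 := by positivity
        field_simp
      rw [he] at h; exact h)
    (fun k y hy => by
      have := term_bound0 (x := y) (by linarith [abs_le_of_mem hy]) k (m := 0)
      simp only [add_zero] at this
      calc ‖aCoef k * y ^ (2 * k)‖ ≤ |y| ^ (2 * k) := by
            rw [Real.norm_eq_abs]; exact this
        _ ≤ |r| ^ (2 * k) := pow_abs_le (by linarith) (abs_le_of_mem hy) _)
    h0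
    (by
      have he : (fun k : ℕ => aCoef k / (2 * k + 1) * (0:ℝ) ^ (2 * k + 1))
          = fun _ => (0:ℝ) := by funext k; simp
      rw [he]; exact summable_zero)
    hmem

lemma hasDerivAt_S2 {x : ℝ} (hx : |x| < 1) :
    HasDerivAt S2 (S1 x) x := by
  obtain ⟨r, hxr, hr1, hr0⟩ := radius_setup hx
  have hrabs : |r| < 1 := by rw [abs_of_nonneg (by linarith)]; exact hr1
  have hmem : x ∈ Ioo (-r) r := by
    constructor <;> [linarith [neg_abs_le x]; linarith [le_abs_self x]]
  have h0 : (0:ℝ) ∈ Ioo (-r) r := by constructor <;> linarith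
  exact hasDerivAt_tsum_of_isPreconnected
    (u := fun k : ℕ => |r| ^ (2 * k)) (summable_geom_sq hrabs)
    (isOpen_Ioo : IsOpen (Ioo (-r) r)) (convex_Ioo _ _).isPreconnected
    (g := fun k z => aCoef k / ((2 * k + 1) * (2 * k + 2)) * z ^ (2 * k + 2))
    (g' := fun k y => aCoef k / (2 * k + 1) * y ^ (2 * k + 1))
    (fun k y _ => by
      have h := (hasDerivAt_pow (2 * k + 2) y).const_mul
        (aCoef k / ((2 * k + 1) * (2 * k + 2)))
      have he : aCoef k / ((2 * k + 1) * (2 * k + 2)) * (↑(2 * k + 2) * y ^ (2 * k + 2 - 1))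
          = aCoef k / (2 * k + 1) * y ^ (2 * k + 1) := by
        have h2 : (2 * k + 2 - 1) = 2 * k + 1 := by omega
        rw [h2]
        push_cast
        have hne1 : ((2 : ℝ) * k + 1) ≠ 0 := by positivity
        have hne2 : ((2 : ℝ) * k + 2) ≠ 0 := by positivity
        field_simp
      rw [he] at h; exact h)
    (fun k y hy => by
      have hy1 : |y| ≤ 1 := by linarith [abs_le_of_mem hy]
      have hb : |aCoef k / (2 * k + 1) * y ^ (2 * k + 1)| ≤ |aCoef k * y ^ (2 * k + 1)| := by
        rw [abs_mul, abs_mul, abs_div]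
        apply mul_le_mul_of_nonneg_right _ (abs_nonneg _)
        apply div_le_self (abs_nonneg _)
        rw [abs_of_pos (by positivity)]
        · push_cast; linarith [(Nat.cast_nonneg k : (0:ℝ) ≤ k)]
      have := term_bound0 (x := y) hy1 k (m := 1)
      calc ‖aCoef k / (2 * k + 1) * y ^ (2 * k + 1)‖
          ≤ |aCoef k * y ^ (2 * k + 1)| := by rw [Real.norm_eq_abs]; exact hb
        _ ≤ |y| ^ (2 * k) := this
        _ ≤ |r| ^ (2 * k) := pow_abs_le (by linarith) (abs_le_of_mem hy) _)
    h0
    (by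
      have he : (fun k : ℕ => aCoef k / ((2 * k + 1) * (2 * k + 2)) * (0:ℝ) ^ (2 * k + 2))
          = fun _ => (0:ℝ) := by funext k; simp
      rw [he]; exact summable_zero)
    hmem

lemma hasDerivAt_S0 {x : ℝ} (hx : |x| < 1) :
    HasDerivAt S0 (∑' k : ℕ, aCoef k * (↑(2 * k) * x ^ (2 * k - 1))) x := by
  obtain ⟨r, hxr, hr1, hr0⟩ := radius_setup hx
  have hrabs : |r| < 1 := by rw [abs_of_nonneg (by linarith)]; exact hr1
  have hmem : x ∈ Ioo (-r) r := by
    constructor <;> [linarith [neg_abs_le x]; linarith [le_abs_self x]]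
  have h0 : (0:ℝ) ∈ Ioo (-r) r := by constructor <;> linarith
  have hu : Summable (fun k : ℕ => 4 * k * |r| ^ (2 * k)) := by
    have h1 : Summable (fun k : ℕ => (k : ℝ) ^ 1 * (|r| ^ 2) ^ k) :=
      summable_pow_mul_geometric_of_norm_lt_one 1
        (by rw [norm_of_nonneg (by positivity)]; nlinarith [abs_nonneg r])
    have := h1.mul_left 4
    apply this.congr
    intro k
    rw [← pow_mul]
    ring
  exact hasDerivAt_tsum_of_isPreconnected
    (u := fun k : ℕ => 4 * k * |r| ^ (2 * k)) hu
    (isOpen_Ioo : IsOpen (Ioo (-r) r)) (convex_Ioo _ _).isPreconnected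
    (g := fun k z => aCoef k * z ^ (2 * k))
    (g' := fun k y => aCoef k * (↑(2 * k) * y ^ (2 * k - 1)))
    (fun k y _ => (hasDerivAt_pow (2 * k) y).const_mul (aCoef k))
    (fun k y hy => by
      rcases Nat.eq_zero_or_pos k with hk | hk
      · subst hk; simp
      · have hyr : |y| ≤ r := abs_le_of_mem hy
        have hrr : (0:ℝ) < r := by linarith
        have hpow : |y| ^ (2 * k - 1) ≤ r ^ (2 * k - 1) :=
          pow_le_pow_left₀ (abs_nonneg y) hyr _
        have hsplit : r ^ (2 * k - 1) * r = r ^ (2 * k) := by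
          rw [← pow_succ]
          congr 1
          omega
        have h2 : r ^ (2 * k - 1) ≤ 2 * r ^ (2 * k) := by
          have : r ^ (2 * k - 1) = r ^ (2 * k) / r := by
            field_simp [hrr.ne']
            linarith [hsplit]
          rw [this]
          rw [div_le_iff₀ hrr]
          nlinarith [pow_nonneg hrr.le (2 * k)]
        have habs : ‖aCoef k * (↑(2 * k) * y ^ (2 * k - 1))‖
            ≤ (2 * k) * |y| ^ (2 * k - 1) := by
          rw [norm_eq_abs, abs_mul, abs_mul, abs_pow]
          have h1 : |aCoef k| ≤ 1 := abs_aCoef_le_one k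
          have h3 : |((2 * k : ℕ) : ℝ)| = 2 * k := by
            rw [abs_of_nonneg (by positivity)]; push_cast; ring
          rw [h3]
          have hmul : |aCoef k| * (2 * ↑k * |y| ^ (2 * k - 1))
              ≤ 1 * (2 * ↑k * |y| ^ (2 * k - 1)) :=
            mul_le_mul_of_nonneg_right h1 (by positivity)
          linarith
        calc ‖aCoef k * (↑(2 * k) * y ^ (2 * k - 1))‖
            ≤ (2 * k) * |y| ^ (2 * k - 1) := habs
          _ ≤ (2 * k) * (2 * r ^ (2 * k)) := by
              apply mul_le_mul_of_nonneg_left _ (by positivity)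
              linarith [le_trans hpow h2]
          _ = 4 * k * r ^ (2 * k) := by ring
          _ = 4 * k * |r| ^ (2 * k) := by rw [abs_of_nonneg hrr.le])
    h0
    (by
      apply (summable_geom_sq (r := 0) (by simp)).of_norm_bounded
      intro k
      rw [Real.norm_eq_abs]
      simpa only [add_zero] using term_bound0 (x := (0:ℝ)) (by simp) k (m := 0))
    hmem

lemma summable_deriv0 {x : ℝ} (hx : |x| < 1) :
    Summable (fun k : ℕ => aCoef k * (↑(2 * k) * x ^ (2 * k - 1))) := by
  have h := (hasDerivAt_S0 hx)
  -- direct proof via comparison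
  rcases eq_or_ne x 0 with rfl | hx0
  · apply summable_of_ne_finset_zero (s := {0})
    intro k hk
    have hk' : k ≠ 0 := by simpa using hk
    have : 2 * k - 1 ≠ 0 := by omega
    simp [zero_pow this]
  · have hx0' : 0 < |x| := abs_pos.mpr hx0
    have h1 : Summable (fun k : ℕ => (k : ℝ) ^ 1 * (|x| ^ 2) ^ k) :=
      summable_pow_mul_geometric_of_norm_lt_one 1
        (by rw [norm_of_nonneg (by positivity)]; nlinarith [abs_nonneg x])
    apply ((h1.mul_left (2 / |x|)).of_norm_bounded)
    intro k
    rcases Nat.eq_zero_or_pos k with hk | hk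
    · subst hk; simp
    · have he : 2 * k - 1 + 1 = 2 * k := by omega
      have habs : ‖aCoef k * (↑(2 * k) * x ^ (2 * k - 1))‖ ≤ 2 * k * |x| ^ (2 * k - 1) := by
        rw [Real.norm_eq_abs, abs_mul, abs_mul, abs_pow]
        have h3 : |((2 * k : ℕ) : ℝ)| = 2 * k := by
          rw [abs_of_nonneg (by positivity)]; push_cast; ring
        rw [h3]
        have hmul : |aCoef k| * (2 * ↑k * |x| ^ (2 * k - 1))
            ≤ 1 * (2 * ↑k * |x| ^ (2 * k - 1)) :=
          mul_le_mul_of_nonneg_right (abs_aCoef_le_one k) (by positivity)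
        linarith
      have heq : 2 / |x| * ((k : ℝ) ^ 1 * (|x| ^ 2) ^ k) = 2 * k * |x| ^ (2 * k - 1) := by
        rw [← pow_mul]
        rw [show (2 * k) = (2 * k - 1) + 1 from he.symm, pow_succ]
        field_simp
        ring_nf; rw [show 1 + (k * 2 - 1) - 1 = k * 2 - 1 by omega]
      rw [heq]
      exact habs

lemma deriv0_identity {x : ℝ} (hx : |x| < 1) :
    (1 - x ^ 2) * (∑' k : ℕ, aCoef k * (↑(2 * k) * x ^ (2 * k - 1))) = x * S0 x := by
  set g : ℕ → ℝ := fun k => aCoef k * (↑(2 * k) * x ^ (2 * k - 1)) with hgdef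
  have hg : Summable g := summable_deriv0 hx
  have hsum0 : Summable (fun k : ℕ => aCoef k * x ^ (2 * k + 1)) :=
    summable_of_bound hx (fun k => term_bound0 hx.le k (m := 1))
  have hx2g : ∀ k : ℕ, x ^ 2 * g k = aCoef k * (2 * k) * x ^ (2 * k + 1) := by
    intro k
    rcases Nat.eq_zero_or_pos k with hk | hk
    · subst hk; simp [hgdef]
    · have hp : x ^ 2 * x ^ (2 * k - 1) = x ^ (2 * k + 1) := by
        rw [← pow_add]; congr 1; omega
      simp only [hgdef]
      push_cast
      calc x ^ 2 * (aCoef k * (2 * (k:ℝ) * x ^ (2 * k - 1)))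
          = aCoef k * (2 * (k:ℝ)) * (x ^ 2 * x ^ (2 * k - 1)) := by ring
        _ = aCoef k * (2 * (k:ℝ)) * x ^ (2 * k + 1) := by rw [hp]
        _ = aCoef k * (2 * (k:ℝ)) * x ^ (2 * k + 1) := rfl
  have hshift : ∑' k, g k = ∑' k : ℕ, aCoef k * (2 * k + 1) * x ^ (2 * k + 1) := by
    rw [Summable.tsum_eq_zero_add hg]
    have hg0 : g 0 = 0 := by simp [hgdef]
    rw [hg0, zero_add]
    congr 1
    funext k
    have he : 2 * (k + 1) - 1 = 2 * k + 1 := by omega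
    simp only [hgdef, he]
    have : aCoef (k + 1) * (↑(2 * (k + 1)) : ℝ) = aCoef k * (2 * k + 1) := by
      have := aCoef_rec k
      push_cast
      linarith
    calc aCoef (k + 1) * (↑(2 * (k + 1)) * x ^ (2 * k + 1))
        = (aCoef (k + 1) * ↑(2 * (k + 1))) * x ^ (2 * k + 1) := by ring
      _ = aCoef k * (2 * k + 1) * x ^ (2 * k + 1) := by rw [this]
  have hsplit : ∑' k : ℕ, aCoef k * (2 * k + 1) * x ^ (2 * k + 1)
      = (∑' k : ℕ, aCoef k * x ^ (2 * k + 1)) + x ^ 2 * ∑' k, g k := by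
    rw [← tsum_mul_left, ← Summable.tsum_add hsum0 (hg.mul_left (x ^ 2))]
    congr 1
    funext k
    rw [hx2g k]
    ring
  have hxS0 : x * S0 x = ∑' k : ℕ, aCoef k * x ^ (2 * k + 1) := by
    rw [S0, ← tsum_mul_left]
    congr 1
    funext k
    rw [pow_succ]
    ring
  rw [hxS0]
  nlinarith [hshift, hsplit]

lemma const_on_Ioo {u : ℝ → ℝ} (hu : ∀ y ∈ Set.Ioo (-1:ℝ) 1, HasDerivAt u 0 y)
    {x : ℝ} (hx : x ∈ Set.Ioo (-1:ℝ) 1) : u x = u 0 := by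
  rcases le_or_gt 0 x with h0x | h0x
  · have hsub : Icc (0:ℝ) x ⊆ Ioo (-1:ℝ) 1 := fun y hy =>
      ⟨by linarith [hy.1], lt_of_le_of_lt hy.2 hx.2⟩
    exact constant_of_has_deriv_right_zero
      (fun y hy => ((hu y (hsub hy)).continuousAt).continuousWithinAt)
      (fun y hy => ((hu y (hsub (Ico_subset_Icc_self hy))).hasDerivWithinAt))
      x (right_mem_Icc.mpr h0x)
  · have hsub : Icc x (0:ℝ) ⊆ Ioo (-1:ℝ) 1 := fun y hy =>
      ⟨lt_of_lt_of_le hx.1 hy.1, by linarith [hy.2]⟩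
    exact (constant_of_has_deriv_right_zero
      (fun y hy => ((hu y (hsub hy)).continuousAt).continuousWithinAt)
      (fun y hy => ((hu y (hsub (Ico_subset_Icc_self hy))).hasDerivWithinAt))
      0 (right_mem_Icc.mpr h0x.le)).symm

lemma sqrt_one_sub_sq_pos {y : ℝ} (hy : |y| < 1) : 0 < Real.sqrt (1 - y ^ 2) := by
  apply Real.sqrt_pos.mpr
  nlinarith [abs_nonneg y, sq_abs y]

lemma hasDerivAt_sqrt_one_sub_sq {y : ℝ} (hy : |y| < 1) :
    HasDerivAt (fun z : ℝ => Real.sqrt (1 - z ^ 2))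
      (1 / (2 * Real.sqrt (1 - y ^ 2)) * (-(2 * y))) y := by
  have h1 : HasDerivAt (fun z : ℝ => 1 - z ^ 2) (-(2 * y)) y := by
    simpa using ((hasDerivAt_pow 2 y).const_sub 1)
  have h2 : (1 - y ^ 2) ≠ 0 := by nlinarith [sqrt_one_sub_sq_pos hy, Real.sq_sqrt (by nlinarith [abs_nonneg y, sq_abs y] : (0:ℝ) ≤ 1 - y ^ 2)]
  exact (Real.hasDerivAt_sqrt h2).comp y h1

lemma S0_zero : S0 0 = 1 := by
  rw [S0, tsum_eq_single 0]
  · simp [aCoef_zero]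
  · intro k hk
    have : 2 * k ≠ 0 := by omega
    simp [zero_pow this]

lemma S0_eq {x : ℝ} (hx : |x| < 1) : S0 x = 1 / Real.sqrt (1 - x ^ 2) := by
  have key : Real.sqrt (1 - x ^ 2) * S0 x = 1 := by
    have hderiv : ∀ y ∈ Set.Ioo (-1:ℝ) 1,
        HasDerivAt (fun y => Real.sqrt (1 - y ^ 2) * S0 y) 0 y := by
      intro y hy
      have hy1 : |y| < 1 := abs_lt.mpr ⟨hy.1, hy.2⟩
      set s := Real.sqrt (1 - y ^ 2) with hs
      have hspos : 0 < s := sqrt_one_sub_sq_pos hy1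
      have hs2 : s ^ 2 = 1 - y ^ 2 :=
        Real.sq_sqrt (by nlinarith [abs_nonneg y, sq_abs y])
      set D := ∑' k : ℕ, aCoef k * (↑(2 * k) * y ^ (2 * k - 1)) with hD
      have hprod := (hasDerivAt_sqrt_one_sub_sq hy1).mul (hasDerivAt_S0 hy1)
      have hzero : 1 / (2 * s) * (-(2 * y)) * S0 y + s * D = 0 := by
        have hid : (1 - y ^ 2) * D = y * S0 y := deriv0_identity hy1
        rw [← hs2] at hid
        field_simp
        nlinarith [hid]
      rw [hzero] at hprod
      exact hprod
    have hconst := const_on_Ioo hderiv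
      (x := x) ⟨by linarith [neg_abs_le x], by linarith [le_abs_self x]⟩
    rw [hconst, S0_zero]
    simp
  have hs : Real.sqrt (1 - x ^ 2) ≠ 0 := (sqrt_one_sub_sq_pos hx).ne'
  field_simp at key ⊢
  linarith [key]

lemma mem_Ioo_of_abs {y : ℝ} (hy : |y| < 1) : y ∈ Set.Ioo (-1:ℝ) 1 :=
  ⟨by linarith [neg_abs_le y], by linarith [le_abs_self y]⟩

lemma S1_zero : S1 0 = 0 := by
  rw [S1]
  have : (fun k : ℕ => aCoef k / (2 * k + 1) * (0:ℝ) ^ (2 * k + 1)) = fun _ => (0:ℝ) := by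
    funext k; simp
  rw [this, tsum_zero]

lemma S2_zero : S2 0 = 0 := by
  rw [S2]
  have : (fun k : ℕ => aCoef k / ((2 * k + 1) * (2 * k + 2)) * (0:ℝ) ^ (2 * k + 2))
      = fun _ => (0:ℝ) := by
    funext k; simp
  rw [this, tsum_zero]

lemma S1_eq {x : ℝ} (hx : |x| < 1) : S1 x = Real.arcsin x := by
  have hderiv : ∀ y ∈ Set.Ioo (-1:ℝ) 1,
      HasDerivAt (fun y => S1 y - Real.arcsin y) 0 y := by
    intro y hy
    have hy1 : |y| < 1 := abs_lt.mpr ⟨hy.1, hy.2⟩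
    have h1 := hasDerivAt_S1 hy1
    rw [S0_eq hy1] at h1
    have h2 := Real.hasDerivAt_arcsin hy.1.ne' hy.2.ne
    have h5 := h1.sub h2; rw [sub_self] at h5; exact h5
  have hc := const_on_Ioo hderiv (mem_Ioo_of_abs hx)
  simp only [S1_zero, Real.arcsin_zero, sub_zero] at hc
  linarith [hc]

lemma S2_eq {x : ℝ} (hx : |x| < 1) :
    S2 x = Real.sqrt (1 - x ^ 2) + x * Real.arcsin x - 1 := by
  have hderiv : ∀ y ∈ Set.Ioo (-1:ℝ) 1,
      HasDerivAt (fun y => S2 y - (Real.sqrt (1 - y ^ 2) + y * Real.arcsin y)) 0 y := by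
    intro y hy
    have hy1 : |y| < 1 := abs_lt.mpr ⟨hy.1, hy.2⟩
    have hs := sqrt_one_sub_sq_pos hy1
    have h1 := hasDerivAt_S2 hy1
    rw [S1_eq hy1] at h1
    have h2 := hasDerivAt_sqrt_one_sub_sq hy1
    have h3 : HasDerivAt (fun z : ℝ => z * Real.arcsin z)
        (1 * Real.arcsin y + y * (1 / Real.sqrt (1 - y ^ 2))) y :=
      (hasDerivAt_id y).mul (Real.hasDerivAt_arcsin hy.1.ne' hy.2.ne)
    have h4 := h2.add h3
    have he : 1 / (2 * Real.sqrt (1 - y ^ 2)) * (-(2 * y))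
        + (1 * Real.arcsin y + y * (1 / Real.sqrt (1 - y ^ 2))) = Real.arcsin y := by
      field_simp
      ring
    rw [he] at h4
    have h5 := h1.sub h4; rw [sub_self] at h5; exact h5
  have hc := const_on_Ioo hderiv (mem_Ioo_of_abs hx)
  simp only [S2_zero] at hc
  have h0 : Real.sqrt (1 - (0:ℝ) ^ 2) = 1 := by simp
  rw [h0] at hc
  simp at hc
  linarith [hc]

lemma summable_u2 : Summable (fun k : ℕ => 1 / (((k:ℝ) + 1) ^ 2)) := by
  have h := Real.summable_one_div_nat_pow.mpr (le_refl 2)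
  have h2 := (summable_nat_add_iff 1).mpr h
  apply h2.congr
  intro k
  push_cast
  ring

lemma S2_continuousOn : ContinuousOn S2 (Set.Icc (-1:ℝ) 1) := by
  have hb : ∀ (k : ℕ) (x : ℝ), x ∈ Set.Icc (-1:ℝ) 1 →
      ‖aCoef k / ((2 * k + 1) * (2 * k + 2)) * x ^ (2 * k + 2)‖ ≤ 1 / (((k:ℝ) + 1) ^ 2) := by
    intro k x hx
    have hx1 : |x| ≤ 1 := abs_le.mpr ⟨hx.1, hx.2⟩
    rw [Real.norm_eq_abs, abs_mul, abs_div, abs_pow]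
    have h1 : |aCoef k| ≤ 1 := abs_aCoef_le_one k
    have h2 : |x| ^ (2 * k + 2) ≤ 1 := pow_le_one₀ (abs_nonneg x) hx1
    have h3 : |((2:ℝ) * k + 1) * (2 * k + 2)| = (2 * k + 1) * (2 * k + 2) := by
      rw [abs_of_pos]; positivity
    rw [h3]
    have h4 : ((k:ℝ) + 1) ^ 2 ≤ (2 * k + 1) * (2 * k + 2) := by nlinarith [(Nat.cast_nonneg k : (0:ℝ) ≤ k)]
    have h5 : (0:ℝ) < ((k:ℝ) + 1) ^ 2 := by positivity
    have h6 : |aCoef k| / ((2 * (k:ℝ) + 1) * (2 * k + 2)) ≤ 1 / (((k:ℝ) + 1) ^ 2) := by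
      exact div_le_div₀ zero_le_one h1 h5 h4
    calc |aCoef k| / ((2 * (k:ℝ) + 1) * (2 * k + 2)) * |x| ^ (2 * k + 2)
        ≤ |aCoef k| / ((2 * (k:ℝ) + 1) * (2 * k + 2)) * 1 :=
          mul_le_mul_of_nonneg_left h2 (by positivity)
      _ = |aCoef k| / ((2 * (k:ℝ) + 1) * (2 * k + 2)) := mul_one _
      _ ≤ 1 / (((k:ℝ) + 1) ^ 2) := h6
  have huni := tendstoUniformlyOn_tsum summable_u2 hb
  apply huni.continuousOn
  refine Filter.Frequently.of_forall (fun t => ?_)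
  apply continuousOn_finset_sum
  intro i _
  exact (Continuous.continuousOn (by continuity))

lemma main_Icc {x : ℝ} (hx : x ∈ Set.Icc (-1:ℝ) 1) :
    Real.sqrt (1 - x ^ 2) + x * Real.arcsin x = 1 + S2 x := by
  have hint : ∀ y ∈ Set.Ioo (-1:ℝ) 1,
      Real.sqrt (1 - y ^ 2) + y * Real.arcsin y = 1 + S2 y := by
    intro y hy
    have := S2_eq (abs_lt.mpr ⟨hy.1, hy.2⟩)
    linarith
  rcases lt_or_ge (|x|) 1 with hlt | hge
  · exact hint x ⟨by linarith [neg_abs_le x], by linarith [le_abs_self x]⟩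
  · have hcontL : Continuous (fun y : ℝ => Real.sqrt (1 - y ^ 2) + y * Real.arcsin y) := by
      apply Continuous.add
      · exact (continuous_const.sub (continuous_pow 2)).sqrt
      · exact continuous_id.mul Real.continuous_arcsin
    have hxcl : x ∈ closure (Set.Ioo (-1:ℝ) 1) := by
      rw [closure_Ioo (by norm_num : (-1:ℝ) ≠ 1)]
      exact hx
    haveI hne : (nhdsWithin x (Set.Ioo (-1:ℝ) 1)).NeBot :=
      mem_closure_iff_nhdsWithin_neBot.mp hxcl
    have h1 : Filter.Tendsto (fun y : ℝ => Real.sqrt (1 - y ^ 2) + y * Real.arcsin y)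
        (nhdsWithin x (Set.Ioo (-1:ℝ) 1))
        (nhds (Real.sqrt (1 - x ^ 2) + x * Real.arcsin x)) :=
      (hcontL.tendsto x).mono_left nhdsWithin_le_nhds
    have h2 : Filter.Tendsto (fun y : ℝ => 1 + S2 y)
        (nhdsWithin x (Set.Ioo (-1:ℝ) 1)) (nhds (1 + S2 x)) := by
      apply Filter.Tendsto.const_add
      exact ((S2_continuousOn x hx).mono Set.Ioo_subset_Icc_self)
    have h3 : Filter.Tendsto (fun y : ℝ => Real.sqrt (1 - y ^ 2) + y * Real.arcsin y)
        (nhdsWithin x (Set.Ioo (-1:ℝ) 1)) (nhds (1 + S2 x)) :=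
      h2.congr' (Filter.eventuallyEq_of_mem self_mem_nhdsWithin
        (fun y hy => (hint y hy).symm))
    exact tendsto_nhds_unique h1 h3

lemma coef_eq (k : ℕ) :
    ((Nat.doubleFactorial (2 * (k + 1) - 3) : ℝ)) ^ 2 / ((Nat.factorial (2 * (k + 1))) : ℝ)
      = aCoef k / ((2 * k + 1) * (2 * k + 2)) := by
  have h1 : 2 * (k + 1) - 3 = 2 * k - 1 := by omega
  have h3 : Nat.factorial (2 * (k + 1)) =
      (2 * k + 2) * ((2 * k + 1) * Nat.factorial (2 * k)) := by
    have : 2 * (k + 1) = (2 * k + 1) + 1 := by omega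
    rw [this, Nat.factorial_succ, Nat.factorial_succ]
  have hf : ((Nat.factorial (2 * k)) : ℝ) ≠ 0 := by
    exact_mod_cast (Nat.factorial_pos _).ne'
  unfold aCoef
  rw [h1, h3]
  push_cast
  have hne1 : ((2:ℝ) * k + 1) ≠ 0 := by positivity
  have hne2 : ((2:ℝ) * k + 2) ≠ 0 := by positivity
  field_simp

theorem gker_taylor_expansion (α : ℝ) (hα : α ∈ Set.Icc (-1 : ℝ) 1) :
    gker α = 1 / (2 * π) + α / 4 +
      ∑' k : ℕ, (1 / (2 * π)) *
        ((Nat.doubleFactorial (2 * (k + 1) - 3) : ℝ) ^ 2 / (Nat.factorial (2 * (k + 1)) : ℝ))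
          * α ^ (2 * (k + 1)) := by
  have hmain := main_Icc hα
  have harccos : Real.arccos α = π / 2 - Real.arcsin α :=
    Real.arccos_eq_pi_div_two_sub_arcsin α
  have hsum : (∑' k : ℕ, (1 / (2 * π)) *
        ((Nat.doubleFactorial (2 * (k + 1) - 3) : ℝ) ^ 2 / (Nat.factorial (2 * (k + 1)) : ℝ))
          * α ^ (2 * (k + 1))) = (1 / (2 * π)) * S2 α := by
    rw [S2, ← tsum_mul_left]
    congr 1
    funext k
    rw [coef_eq k, show 2 * (k + 1) = 2 * k + 2 from by ring]
    ring
  rw [hsum, gker, harccos]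
  have hsqrt : Real.sqrt (1 - α ^ 2) = 1 + S2 α - α * Real.arcsin α := by linarith
  rw [hsqrt]
  have hπ : (π:ℝ) ≠ 0 := Real.pi_ne_zero
  field_simp
  ring
end

section
/- The function g(α) = (1/(2π))(√(1−α²) + α(π − arccos α)) is strictly increasing on [−1,1]. -/
open Real

theorem gker_strictMonoOn : StrictMonoOn gker (Set.Icc (-1 : ℝ) 1) := by
  have hπ : (0:ℝ) < π := Real.pi_pos
  apply strictMonoOn_of_hasDerivWithinAt_pos (convex_Icc _ _)
    (f' := fun x => (1 / (2 * π)) * (π - Real.arccos x))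
  · -- continuity
    apply Continuous.continuousOn
    unfold gker
    exact continuous_const.mul (((continuous_const.sub (continuous_pow 2)).sqrt).add
      (continuous_id.mul (continuous_const.sub Real.continuous_arccos)))
  · intro x hx
    rw [interior_Icc] at hx
    have h1 : x ≠ -1 := ne_of_gt hx.1
    have h2 : x ≠ 1 := ne_of_lt hx.2
    have hsq : (0:ℝ) < 1 - x ^ 2 := by nlinarith [hx.1, hx.2]
    have hs : Real.sqrt (1 - x ^ 2) ≠ 0 := by positivity
    have hsqrt : HasDerivAt (fun y : ℝ => Real.sqrt (1 - y ^ 2))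
        (-x / Real.sqrt (1 - x ^ 2)) x := by
      have h := (Real.hasDerivAt_sqrt (ne_of_gt hsq)).comp x
        ((hasDerivAt_pow 2 x).const_sub 1)
      refine h.congr_deriv ?_
      have : Real.sqrt (1 - x ^ 2) > 0 := Real.sqrt_pos.2 hsq
      field_simp
      ring
    have harccos := Real.hasDerivAt_arccos h1 h2
    have hmul : HasDerivAt (fun y : ℝ => y * (π - Real.arccos y))
        (1 * (π - Real.arccos x) + x * (0 - (-(1 / Real.sqrt (1 - x ^ 2))))) x :=
      (hasDerivAt_id x).mul ((hasDerivAt_const x π).sub harccos)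
    have hd : HasDerivAt gker ((1 / (2 * π)) * (π - Real.arccos x)) x := by
      have := ((hsqrt.add hmul).const_mul (1 / (2 * π)))
      refine this.congr_deriv ?_
      have hss : Real.sqrt (1 - x ^ 2) ^ 2 = 1 - x ^ 2 := Real.sq_sqrt hsq.le
      field_simp
      ring
    exact hd.hasDerivWithinAt
  · intro x hx
    rw [interior_Icc] at hx
    have h : Real.arccos x < π :=
      lt_of_le_of_ne (Real.arccos_le_pi x)
        (fun he => absurd (Real.arccos_eq_pi.mp he) (by linarith [hx.1]))
    exact mul_pos (by positivity) (by linarith)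
end

section
/- The function g(α) = (1/(2π))(√(1−α²) + α(π − arccos α)) is convex on [−1,1], satisfies g(1) = 1/2, g(−1) = 0, and g(0) = 1/(2π). -/
open Real

lemma gker_hasDerivAt {x : ℝ} (hx1 : -1 < x) (hx2 : x < 1) :
    HasDerivAt gker ((1 / (2 * π)) * (π - Real.arccos x)) x := by
  have hs : (0:ℝ) < 1 - x ^ 2 := by nlinarith
  have hsqrt : Real.sqrt (1 - x ^ 2) ≠ 0 := by positivity
  have h1 : HasDerivAt (fun y : ℝ => 1 - y ^ 2) (-(2 * x)) x := by
    simpa using ((hasDerivAt_pow 2 x).const_sub 1)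
  have h2 : HasDerivAt (fun y : ℝ => Real.sqrt (1 - y ^ 2))
      (-(2 * x) / (2 * Real.sqrt (1 - x ^ 2))) x :=
    by simpa [Function.comp_def, div_eq_inv_mul, mul_comm, mul_assoc, mul_left_comm] using
      ((Real.hasDerivAt_sqrt (ne_of_gt hs)).comp x h1)
  have h3 : HasDerivAt Real.arccos (-(1 / Real.sqrt (1 - x ^ 2))) x :=
    Real.hasDerivAt_arccos (by linarith) (by linarith)
  have h4 : HasDerivAt (fun y : ℝ => y * (π - Real.arccos y))
      (1 * (π - Real.arccos x) + x * (0 - -(1 / Real.sqrt (1 - x ^ 2)))) x :=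
    (hasDerivAt_id x).mul ((hasDerivAt_const x π).sub h3)
  have h5 := (h2.add h4).const_mul (1 / (2 * π))
  convert h5 using 1
  · rfl
  · rfl
  · rfl
  field_simp
  ring
lemma arccos_anti : ∀ {a b : ℝ}, a ≤ b → Real.arccos b ≤ Real.arccos a := by
  intro a b hab
  unfold Real.arccos
  have := Real.monotone_arcsin hab
  linarith

theorem gker_convex_and_values :
    ConvexOn ℝ (Set.Icc (-1 : ℝ) 1) gker ∧
    gker 1 = 1 / 2 ∧ gker (-1) = 0 ∧ gker 0 = 1 / (2 * π) := by
  refine ⟨?_, ?_, ?_, ?_⟩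
  · have hc : ContinuousOn gker (Set.Icc (-1:ℝ) 1) := by
      apply Continuous.continuousOn
      unfold gker
      exact continuous_const.mul ((Real.continuous_sqrt.comp (by continuity)).add (continuous_id.mul (continuous_const.sub Real.continuous_arccos)))
    apply MonotoneOn.convexOn_of_deriv (convex_Icc _ _) hc
    · rw [interior_Icc]
      intro x hx
      exact (gker_hasDerivAt hx.1 hx.2).differentiableAt.differentiableWithinAt
    · rw [interior_Icc]
      intro a ha b hb hab
      rw [(gker_hasDerivAt ha.1 ha.2).deriv, (gker_hasDerivAt hb.1 hb.2).deriv]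
      have : Real.arccos b ≤ Real.arccos a := arccos_anti hab
      have hπ : (0:ℝ) < π := Real.pi_pos
      have : π - Real.arccos a ≤ π - Real.arccos b := by linarith
      apply mul_le_mul_of_nonneg_left this
      positivity
  · rw [gker]
    simp [Real.arccos_one]
    field_simp
  · simp [gker, Real.arccos_neg_one]
  · simp [gker, Real.arccos_zero]
end

section
/- For the ETF value of the limit objective R̃_ETF(M) = M / (g(1) + (M−1) g(−1/(M−1))) with g the ReLU Gaussian kernel, the sequence R̃_ETF(M) is increasing in M and R̃_ETF(M) → 2π as M → ∞. -/
open Real Filter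

/-- The value of the limit objective at the ETF configuration with `M` neurons. -/
noncomputable def RETF (M : ℕ) : ℝ :=
  (M : ℝ) / (gker 1 + ((M : ℝ) - 1) * gker (-1 / ((M : ℝ) - 1)))

noncomputable def Dd (m : ℝ) : ℝ := π + Real.sqrt (m^2 - 2*m) - Real.arccos (1/(m-1))

lemma gker_one : gker 1 = 1/2 := by
  simp only [gker, one_pow, sub_self, Real.sqrt_zero, Real.arccos_one, sub_zero, zero_add, one_mul]
  field_simp

lemma denom_eq (m : ℝ) (hm : 2 ≤ m) :
    gker 1 + (m - 1) * gker (-1 / (m - 1)) = Dd m / (2 * π) := by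
  have h1 : (1:ℝ) ≤ m - 1 := by linarith
  have h0 : m - 1 ≠ 0 := by linarith
  have key : (m-1) * Real.sqrt (1 - (-1/(m-1))^2) = Real.sqrt (m^2 - 2*m) := by
    have e : m^2 - 2*m = (m-1)^2 * (1 - (-1/(m-1))^2) := by
      field_simp
      ring
    rw [e, Real.sqrt_mul (sq_nonneg _), Real.sqrt_sq (by linarith)]
  have harc : Real.arccos (-1/(m-1)) = π - Real.arccos (1/(m-1)) := by
    rw [neg_div, Real.arccos_neg]
  rw [gker_one, gker, harc, Dd]
  have : (m - 1) * (1 / (2 * π) * (Real.sqrt (1 - (-1 / (m - 1)) ^ 2) +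
      -1 / (m - 1) * (π - (π - Real.arccos (1 / (m - 1)))))) =
      (1 / (2 * π)) * ((m-1) * Real.sqrt (1 - (-1/(m-1))^2) - Real.arccos (1/(m-1))) := by
    field_simp
    ring
  rw [this, key]
  field_simp
  ring

lemma RETF_eq (M : ℕ) (hM : 2 ≤ M) : RETF M = 2 * π * (M:ℝ) / Dd (M:ℝ) := by
  have hm : (2:ℝ) ≤ (M:ℝ) := by exact_mod_cast hM
  rw [RETF, denom_eq _ hm, div_div_eq_mul_div]
  ring_nf

lemma Dd_pos (m : ℝ) (hm : 2 ≤ m) : π/2 ≤ Dd m := by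
  have h1 : Real.arccos (1/(m-1)) ≤ π/2 := Real.arccos_le_pi_div_two.2 (le_of_lt (div_pos one_pos (by linarith)))
  have h2 : 0 ≤ Real.sqrt (m^2 - 2*m) := Real.sqrt_nonneg _
  unfold Dd; linarith

set_option maxHeartbeats 1000000 in
lemma key_ineq (m : ℝ) (hm : 3 ≤ m) : m * Dd (m+1) ≤ (m+1) * Dd m := by
  have hm1 : (0:ℝ) < m - 1 := by linarith
  have hπ := Real.pi_pos
  have e1 : (m+1)^2 - 2*(m+1) = m^2 - 1 := by ring
  have e2 : (m+1) - 1 = m := by ring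
  have hs2 : (Real.sqrt (m^2 - 2*m))^2 = m^2 - 2*m := Real.sq_sqrt (by nlinarith)
  have ht2 : (Real.sqrt (m^2 - 1))^2 = m^2 - 1 := Real.sq_sqrt (by nlinarith)
  have hsnn : 0 ≤ Real.sqrt (m^2 - 2*m) := Real.sqrt_nonneg _
  have htnn : 0 ≤ Real.sqrt (m^2 - 1) := Real.sqrt_nonneg _
  have hs' : m*(m-1) ≤ (m+1) * Real.sqrt (m^2 - 2*m) := by
    have h : m*(m-1)/(m+1) ≤ Real.sqrt (m^2 - 2*m) := by
      rw [Real.le_sqrt (div_nonneg (by nlinarith) (by linarith)) (by nlinarith)]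
      rw [div_pow, div_le_iff₀ (by positivity)]
      nlinarith
    have h2 := mul_le_mul_of_nonneg_left h (show (0:ℝ) ≤ m+1 by linarith)
    calc m*(m-1) = (m+1) * (m*(m-1)/(m+1)) := by field_simp
      _ ≤ (m+1) * Real.sqrt (m^2 - 2*m) := h2
  have ht' : m*(m-1) ≤ m * Real.sqrt (m^2 - 1) := by
    have h : m - 1 ≤ Real.sqrt (m^2 - 1) := by
      rw [Real.le_sqrt (by linarith) (by nlinarith)]; nlinarith
    nlinarith
  -- arcsin bounds
  have hvmem : (1:ℝ)/m ≤ 1 := by rw [div_le_one (by linarith)]; linarith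
  have hvmem' : (-1:ℝ) ≤ 1/m := le_trans (by norm_num) (le_of_lt (div_pos one_pos (by linarith)))
  have hv0 : 0 ≤ Real.arcsin (1/m) := Real.arcsin_nonneg.2 (le_of_lt (div_pos one_pos (by linarith)))
  have hv : m * Real.arcsin (1/m) ≤ π/2 := by
    have h2 := Real.mul_le_sin hv0 (Real.arcsin_le_pi_div_two _)
    rw [Real.sin_arcsin hvmem' hvmem] at h2
    have hv' : Real.arcsin (1/m) ≤ π/2 * (1/m) := by
      calc Real.arcsin (1/m) = (π/2) * (2/π * Real.arcsin (1/m)) := by field_simp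
        _ ≤ (π/2) * (1/m) := mul_le_mul_of_nonneg_left h2 (by positivity)
    calc m * Real.arcsin (1/m) ≤ m * (π/2 * (1/m)) :=
          mul_le_mul_of_nonneg_left hv' (by linarith)
      _ = π/2 := by field_simp
  have humem : (1:ℝ)/(m-1) ≤ 1 := by rw [div_le_one hm1]; linarith
  have humem' : (-1:ℝ) ≤ 1/(m-1) := le_trans (by norm_num) (le_of_lt (div_pos one_pos hm1))
  have hu0 : 0 ≤ Real.arcsin (1/(m-1)) :=
    Real.arcsin_nonneg.2 (le_of_lt (div_pos one_pos hm1))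
  have hu : 1/(m-1) ≤ Real.arcsin (1/(m-1)) := by
    have h := Real.sin_le hu0
    rwa [Real.sin_arcsin humem' humem] at h
  have H2 : (m+1) ≤ (m-1)*((m+1) * Real.arcsin (1/(m-1))) := by
    have h1 : 1 ≤ (m-1) * Real.arcsin (1/(m-1)) := by
      have h2 := mul_le_mul_of_nonneg_left hu (le_of_lt hm1)
      calc (1:ℝ) = (m-1)*(1/(m-1)) := by field_simp
        _ ≤ (m-1) * Real.arcsin (1/(m-1)) := h2
    nlinarith
  have hAB : (m * Real.sqrt (m^2-1) - (m+1) * Real.sqrt (m^2-2*m)) *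
      (m * Real.sqrt (m^2-1) + (m+1) * Real.sqrt (m^2-2*m)) = 2*m^2 + 2*m := by
    linear_combination m^2 * ht2 - (m+1)^2 * hs2
  have hd : (m * Real.sqrt (m^2-1) - (m+1) * Real.sqrt (m^2-2*m)) * (m-1) ≤ m+1 := by
    rcases le_or_gt (m * Real.sqrt (m^2-1) - (m+1) * Real.sqrt (m^2-2*m)) 0 with h | h
    · nlinarith
    · have hsum : 2*m*(m-1) ≤ m * Real.sqrt (m^2-1) + (m+1) * Real.sqrt (m^2-2*m) := by
        linarith
      have h2 : (m * Real.sqrt (m^2-1) - (m+1) * Real.sqrt (m^2-2*m)) * (2*m*(m-1)) ≤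
          2*m^2 + 2*m := by
        calc (m * Real.sqrt (m^2-1) - (m+1) * Real.sqrt (m^2-2*m)) * (2*m*(m-1))
            ≤ (m * Real.sqrt (m^2-1) - (m+1) * Real.sqrt (m^2-2*m)) *
              (m * Real.sqrt (m^2-1) + (m+1) * Real.sqrt (m^2-2*m)) :=
              mul_le_mul_of_nonneg_left hsum h.le
          _ = 2*m^2 + 2*m := hAB
      nlinarith
  have H1 : (m-1)*(m * Real.arcsin (1/m)) ≤ (m-1)*(π/2) :=
    mul_le_mul_of_nonneg_left hv (le_of_lt hm1)
  have H3 : (m-1)*(m * Real.sqrt (m^2-1)) ≤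
      (m+1) + (m-1)*((m+1) * Real.sqrt (m^2-2*m)) := by nlinarith [hd]
  have hmain : (m-1) * (m * (π + Real.sqrt (m^2-1) - (π/2 - Real.arcsin (1/m)))) ≤
      (m-1) * ((m+1) * (π + Real.sqrt (m^2-2*m) - (π/2 - Real.arcsin (1/(m-1))))) := by
    ring_nf
    ring_nf at H1 H2 H3
    linarith
  unfold Dd
  rw [e1, e2, Real.arccos_eq_pi_div_two_sub_arcsin, Real.arccos_eq_pi_div_two_sub_arcsin]
  exact le_of_mul_le_mul_left hmain hm1

lemma mono_ge3 (M : ℕ) (hM : 3 ≤ M) : RETF M ≤ RETF (M+1) := by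
  have hm : (3:ℝ) ≤ (M:ℝ) := by exact_mod_cast hM
  have hπ := Real.pi_pos
  rw [RETF_eq M (by omega), RETF_eq (M+1) (by omega)]
  push_cast
  have hD1 := Dd_pos (M:ℝ) (by linarith)
  have hD2 := Dd_pos ((M:ℝ)+1) (by linarith)
  rw [div_le_div_iff₀ (by linarith) (by linarith)]
  have hk := key_ineq (M:ℝ) hm
  nlinarith [hk]

lemma RETF_two : RETF 2 = 4 := by
  have h := Real.pi_ne_zero
  norm_num [RETF, gker, Real.arccos_neg_one, Real.arccos_one]
  field_simp
  ring

lemma mono_two : RETF 2 ≤ RETF 3 := by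
  rw [RETF_two, RETF_eq 3 (by norm_num)]
  have hπ := Real.pi_pos
  have harc : Real.arcsin (1/2) = π/6 := by
    rw [← Real.sin_pi_div_six, Real.arcsin_sin (by linarith) (by linarith)]
  have hDd : Dd (3:ℕ) = π + Real.sqrt 3 - π/3 := by
    unfold Dd
    norm_num
    rw [Real.arccos_eq_pi_div_two_sub_arcsin]
    rw [harc]
    ring
  rw [hDd]
  have hs3 : Real.sqrt 3 ^ 2 = 3 := Real.sq_sqrt (by norm_num)
  have hs3' : 0 ≤ Real.sqrt 3 := Real.sqrt_nonneg _
  have hpos : 0 < π + Real.sqrt 3 - π/3 := by nlinarith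
  rw [le_div_iff₀ hpos]
  push_cast
  nlinarith [Real.pi_gt_d6, sq_nonneg (Real.sqrt 3 - 1.8)]

lemma Dd_lower (m : ℝ) (hm : 2 ≤ m) : m - 2 ≤ Dd m := by
  have h1 : Real.arccos (1/(m-1)) ≤ π := Real.arccos_le_pi _
  have h2 : m - 2 ≤ Real.sqrt (m^2 - 2*m) := by
    rw [Real.le_sqrt (by linarith) (by nlinarith)]; nlinarith
  unfold Dd; linarith

lemma Dd_upper (m : ℝ) (hm : 2 ≤ m) : Dd m ≤ π + m := by
  have h1 : 0 ≤ Real.arccos (1/(m-1)) := Real.arccos_nonneg _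
  have h2 : Real.sqrt (m^2 - 2*m) ≤ m := by
    calc Real.sqrt (m^2 - 2*m) ≤ Real.sqrt (m^2) := Real.sqrt_le_sqrt (by nlinarith)
      _ = m := Real.sqrt_sq (by linarith)
  unfold Dd; linarith

lemma tendsto_RETF : Tendsto RETF atTop (nhds (2 * π)) := by
  have hπ := Real.pi_pos
  have hDdiv : Tendsto (fun M : ℕ => Dd (M:ℝ) / (M:ℝ)) atTop (nhds 1) := by
    have h1 : Tendsto (fun M : ℕ => 1 - 2/(M:ℝ)) atTop (nhds 1) := by
      have := (tendsto_const_div_atTop_nhds_zero_nat (2:ℝ)).const_sub 1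
      simpa using this
    have h2 : Tendsto (fun M : ℕ => 1 + π/(M:ℝ)) atTop (nhds 1) := by
      have := (tendsto_const_div_atTop_nhds_zero_nat π).const_add 1
      simpa using this
    apply tendsto_of_tendsto_of_tendsto_of_le_of_le' h1 h2
    · filter_upwards [eventually_ge_atTop 2] with M hM
      have hm : (2:ℝ) ≤ (M:ℝ) := by exact_mod_cast hM
      have hmpos : (0:ℝ) < M := by linarith
      have := Dd_lower (M:ℝ) hm
      rw [show 1 - 2/(M:ℝ) = ((M:ℝ) - 2)/(M:ℝ) by field_simp]
      exact (div_le_div_iff_of_pos_right hmpos).2 this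
    · filter_upwards [eventually_ge_atTop 2] with M hM
      have hm : (2:ℝ) ≤ (M:ℝ) := by exact_mod_cast hM
      have hmpos : (0:ℝ) < M := by linarith
      have := Dd_upper (M:ℝ) hm
      rw [show 1 + π/(M:ℝ) = (π + (M:ℝ))/(M:ℝ) by field_simp; ring]
      exact (div_le_div_iff_of_pos_right hmpos).2 this
  have hmain : Tendsto (fun M : ℕ => 2*π / (Dd (M:ℝ)/(M:ℝ))) atTop (nhds (2*π)) := by
    have h := Tendsto.div (tendsto_const_nhds (x := 2*π) (f := atTop)) hDdiv one_ne_zero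
    simpa [Pi.div_def] using h
  apply hmain.congr'
  filter_upwards [eventually_ge_atTop 2] with M hM
  rw [RETF_eq M hM, div_div_eq_mul_div]

theorem RETF_increasing_tendsto :
    (∀ M : ℕ, 2 ≤ M → RETF M ≤ RETF (M + 1)) ∧
    Tendsto RETF atTop (nhds (2 * π)) := by
  constructor
  · intro M hM
    rcases eq_or_lt_of_le hM with h | h
    · rw [← h]; exact mono_two
    · exact mono_ge3 M h
  · exact tendsto_RETF
end
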